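/- Let k ≥ 3 and let C be a connected bipartite graph containing no path on 2k vertices. If the minimum degree of C equals k−1, then one of the two parts of the bipartition of C has exactly k−1 vertices. -/

import Mathlib

/-- `G` contains a path on `m` vertices (as a subgraph). -/
def HasPathOn {V : Type*} (G : SimpleGraph V) (m : ℕ) : Prop :=
  ∃ f : Fin m → V, Function.Injective f ∧
    ∀ (i : ℕ) (h : i + 1 < m), G.Adj (f ⟨i, Nat.lt_of_succ_lt h⟩) (f ⟨i + 1, h⟩)

theorem hasPathOn_of_list {V : Type*} (C : SimpleGraph V) (L : List V) (hnd : L.Nodup)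
    (hch : L.Chain' C.Adj) : HasPathOn C L.length := by
  refine ⟨L.get, List.nodup_iff_injective_get.mp hnd, fun i h => ?_⟩
  exact List.isChain_iff_getElem.mp hch i (by omega)

theorem hasPathOn_mono {V : Type*} {C : SimpleGraph V} {m n : ℕ} (h : HasPathOn C m)
    (hnm : n ≤ m) : HasPathOn C n := by
  obtain ⟨f, hf, ha⟩ := h
  exact ⟨fun i => f ⟨i, lt_of_lt_of_le i.2 hnm⟩,
    fun a b hab => by simpa [Fin.ext_iff] using hf hab,
    fun i h => ha i (by omega)⟩

section asc
variable {V : Type*} (F : ℕ → V) (a b : ℕ)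

def asc : List V := (List.range' a b).map F

@[simp] lemma asc_length : (asc F a b).length = b := by simp [asc]

lemma mem_asc {x : V} : x ∈ asc F a b ↔ ∃ i, a ≤ i ∧ i < a + b ∧ x = F i := by
  simp only [asc, List.mem_map, List.mem_range'_1]
  constructor
  · rintro ⟨i, ⟨h1, h2⟩, rfl⟩; exact ⟨i, h1, h2, rfl⟩
  · rintro ⟨i, h1, h2, rfl⟩; exact ⟨i, ⟨h1, h2⟩, rfl⟩

lemma nodup_asc (h : ∀ i j, a ≤ i → i < a + b → a ≤ j → j < a + b → F i = F j → i = j) :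
    (asc F a b).Nodup := by
  refine List.Nodup.map_on ?_ (List.nodup_range' (s := a) (n := b))
  intro x hx y hy hxy
  rw [List.mem_range'_1] at hx hy
  exact h x y hx.1 hx.2 hy.1 hy.2 hxy

lemma head?_asc (hb : 0 < b) : (asc F a b).head? = some (F a) := by
  obtain ⟨b', rfl⟩ := Nat.exists_eq_succ_of_ne_zero hb.ne'
  simp [asc, List.range'_succ]

lemma getLast?_asc (hb : 0 < b) : (asc F a b).getLast? = some (F (a + b - 1)) := by
  obtain ⟨b', rfl⟩ := Nat.exists_eq_succ_of_ne_zero hb.ne'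
  have h2 : List.range' a (b' + 1) = List.range' a b' ++ [a + b'] := by
    simpa using List.range'_concat (step := 1) (s := a) (n := b')
  simp [asc, h2]

lemma head?_asc_rev (hb : 0 < b) : (asc F a b).reverse.head? = some (F (a + b - 1)) := by
  rw [List.head?_reverse, getLast?_asc F a b hb]

lemma getLast?_asc_rev (hb : 0 < b) : (asc F a b).reverse.getLast? = some (F a) := by
  rw [List.getLast?_reverse, head?_asc F a b hb]

lemma chain'_asc {C : SimpleGraph V} (h : ∀ i, a ≤ i → i + 1 < a + b → C.Adj (F i) (F (i+1))) :
    List.Chain' C.Adj (asc F a b) := by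
  induction b generalizing a with
  | zero => simp [asc]; exact List.isChain_nil
  | succ n ih =>
    show List.IsChain C.Adj (asc F a (n+1))
    rw [asc, List.range'_succ, List.map_cons, List.isChain_cons]
    constructor
    · intro y hy
      rcases Nat.eq_zero_or_pos n with rfl | hn
      · simp [asc] at hy
      · rw [show (List.range' (a+1) n).map F = asc F (a+1) n from rfl,
          head?_asc F (a+1) n hn] at hy
        obtain rfl := Option.some_injective _ hy.symm
        exact h a le_rfl (by omega)
    · exact ih (a+1) (fun i h1 h2 => h i (by omega) (by omega))

lemma chain'_asc_rev {C : SimpleGraph V} (h : ∀ i, a ≤ i → i + 1 < a + b → C.Adj (F i) (F (i+1))) :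
    List.Chain' C.Adj (asc F a b).reverse := by
  show List.IsChain C.Adj (asc F a b).reverse
  rw [List.isChain_reverse]
  exact List.IsChain.imp (fun x y hxy => hxy.symm) (chain'_asc F a b h)

end asc

/-- No list `pre ++ [F j, F (j-1), ..., F 0] ++ T` of length `l+1` can be a path,
if `l` is the longest path length. -/
lemma no_ext {V : Type*} {C : SimpleGraph V} {F : ℕ → V} {l : ℕ}
    (hFinj : ∀ i j, i < l → j < l → F i = F j → i = j)
    (hFadj : ∀ i, i + 1 < l → C.Adj (F i) (F (i+1)))
    (hlmax : ∀ m, HasPathOn C m → m ≤ l)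
    (pre : List V) (hpnd : pre.Nodup) (hpch : pre.Chain' C.Adj)
    (hpA : ∀ x ∈ pre, ∀ i, i < l → x ≠ F i)
    (j s : ℕ) (hj : j < l) (hjs : j < s)
    (hlastp : ∀ x ∈ pre.getLast?, C.Adj x (F j))
    (T : List V) (hTnd : T.Nodup) (hTch : T.Chain' C.Adj)
    (hTmem : ∀ x ∈ T, ∃ i, s ≤ i ∧ i < l ∧ x = F i)
    (hThead : ∀ x ∈ T.head?, C.Adj (F 0) x)
    (hlen : pre.length + (j + 1) + T.length = l + 1) : False := by
  set R : List V := (asc F 0 (j+1)).reverse with hR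
  have hmemR : ∀ x ∈ R, ∃ i, i ≤ j ∧ x = F i := by
    intro x hx
    rw [hR, List.mem_reverse, mem_asc] at hx
    obtain ⟨i, _, h2, rfl⟩ := hx
    exact ⟨i, by omega, rfl⟩
  have hndR : R.Nodup := by
    rw [hR, List.nodup_reverse]
    exact nodup_asc F 0 (j+1) (fun i j' h1 h2 h3 h4 h5 => hFinj i j' (by omega) (by omega) h5)
  have hchR : List.Chain' C.Adj R :=
    chain'_asc_rev F 0 (j+1) (fun i h1 h2 => hFadj i (by omega))
  have hRhead : R.head? = some (F j) := by
    rw [hR, head?_asc_rev F 0 (j+1) (by omega)]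
    congr 2
    omega
  have hRlast : R.getLast? = some (F 0) := by
    rw [hR]; exact getLast?_asc_rev F 0 (j+1) (by omega)
  set L : List V := pre ++ (R ++ T) with hL
  have hnd : L.Nodup := by
    rw [hL, List.nodup_append]
    refine ⟨hpnd, ?_, ?_⟩
    · rw [List.nodup_append]
      refine ⟨hndR, hTnd, ?_⟩
      intro x hx _ hxT rfl
      obtain ⟨i, hi, rfl⟩ := hmemR x hx
      obtain ⟨i', hi'1, hi'2, he⟩ := hTmem _ hxT
      have := hFinj i i' (by omega) hi'2 he
      omega
    · intro x hxp _ hxin rfl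
      rw [List.mem_append] at hxin
      rcases hxin with hx | hx
      · obtain ⟨i, hi, rfl⟩ := hmemR x hx
        exact hpA _ hxp i (by omega) rfl
      · obtain ⟨i, _, hi2, rfl⟩ := hTmem x hx
        exact hpA _ hxp i hi2 rfl
  have hch : L.Chain' C.Adj := by
    rw [hL]
    show List.IsChain C.Adj (pre ++ (R ++ T))
    rw [List.isChain_append]
    refine ⟨hpch, ?_, ?_⟩
    · rw [List.isChain_append]
      refine ⟨hchR, hTch, ?_⟩
      intro x hx y hy
      rw [hRlast] at hx
      obtain rfl : F 0 = x := by simpa using hx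
      exact hThead y hy
    · intro x hx y hy
      obtain ⟨rest, hrest⟩ : ∃ rest, R = F j :: rest := by
        cases hc : R with
        | nil => rw [hc] at hRhead; simp at hRhead
        | cons a t =>
          rw [hc] at hRhead
          simp only [List.head?_cons, Option.some_inj] at hRhead
          exact ⟨t, by rw [hRhead]⟩
      rw [hrest, List.cons_append] at hy
      obtain rfl : F j = y := by simpa using hy
      exact hlastp x hx
  have hlength : L.length = l + 1 := by
    simp only [hL, List.length_append, List.length_reverse, asc_length, hR]
    omega
  have := hlmax _ (hlength ▸ hasPathOn_of_list C L hnd hch)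
  omega

lemma boundary {V : Type*} {C : SimpleGraph V} (S : V → Prop) :
    ∀ {a b : V} (_ : C.Walk a b), ¬ S a → S b →
    ∃ p q, ¬ S p ∧ S q ∧ C.Adj p q ∧ (p = a ∨ ∃ r, ¬ S r ∧ C.Adj r p) := by
  intro a b w
  induction w with
  | nil => intro h1 h2; exact absurd h2 h1
  | @cons u v b' h p ih =>
    intro h1 h2
    by_cases hv : S v
    · exact ⟨u, v, h1, hv, h, Or.inl rfl⟩
    · obtain ⟨p', q', hp', hq', hadj, htag⟩ := ih hv h2
      refine ⟨p', q', hp', hq', hadj, Or.inr ?_⟩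
      rcases htag with rfl | ⟨r, hr, hradj⟩
      · exact ⟨u, h1, h⟩
      · exact ⟨r, hr, hradj⟩

/-- If `C` is a connected bipartite graph with no path on `2k` vertices (`k ≥ 3`)
and minimum degree exactly `k - 1`, then one of its bipartition classes has
exactly `k - 1` vertices. -/
theorem stmt1 {V : Type*} [Fintype V] [DecidableEq V] [Nonempty V]
    (C : SimpleGraph V) [DecidableRel C.Adj] (k : ℕ) (hk : 3 ≤ k) (c : V → Bool)
    (hbip : ∀ u v, C.Adj u v → c u ≠ c v)
    (hconn : C.Connected)
    (hnopath : ¬ HasPathOn C (2 * k))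
    (hmin : C.minDegree = k - 1) :
    (Finset.univ.filter fun v => c v = true).card = k - 1 ∨
    (Finset.univ.filter fun v => c v = false).card = k - 1 := by
  classical
  have hdeg : ∀ v : V, k - 1 ≤ C.degree v := fun v => hmin ▸ C.minDegree_le_degree v
  have hbound : ∀ m, HasPathOn C m → m ≤ Fintype.card V := by
    rintro m ⟨f, hf, -⟩
    simpa using Fintype.card_le_of_injective f hf
  have hpath1 : HasPathOn C 1 :=
    ⟨fun _ => Classical.arbitrary V, fun a b _ => Subsingleton.elim a b,
     fun i h => absurd h (by omega)⟩
  set l := Nat.findGreatest (HasPathOn C) (Fintype.card V) with hldef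
  have hlmax : ∀ m, HasPathOn C m → m ≤ l := fun m hm => Nat.le_findGreatest (hbound m hm) hm
  have hl1 : 1 ≤ l := hlmax 1 hpath1
  have hlpath : HasPathOn C l := Nat.findGreatest_spec Fintype.card_pos hpath1
  obtain ⟨f, hfinj, hfadj⟩ := hlpath
  set F : ℕ → V := fun i => f ⟨min i (l-1), by omega⟩ with hFdef
  have hFeq : ∀ i (h : i < l), F i = f ⟨i, h⟩ := by
    intro i h
    simp only [hFdef]
    congr 1
    exact Fin.ext (by simp only []; omega)
  have hFinj : ∀ i j, i < l → j < l → F i = F j → i = j := by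
    intro i j hi hj h
    rw [hFeq i hi, hFeq j hj] at h
    simpa [Fin.ext_iff] using hfinj h
  have hFadj : ∀ i, i + 1 < l → C.Adj (F i) (F (i+1)) := by
    intro i h
    rw [hFeq i (by omega), hFeq (i+1) h]
    exact hfadj i h
  have hnoext := no_ext hFinj hFadj hlmax
  set A : Finset V := (Finset.range l).image F with hAdef
  have hmemA : ∀ v : V, v ∈ A ↔ ∃ i, i < l ∧ v = F i := by
    intro v
    simp only [hAdef, Finset.mem_image, Finset.mem_range]
    constructor
    · rintro ⟨i, hi, rfl⟩; exact ⟨i, hi, rfl⟩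
    · rintro ⟨i, hi, rfl⟩; exact ⟨i, hi, rfl⟩
  have hF0A : F 0 ∈ A := (hmemA _).mpr ⟨0, by omega, rfl⟩
  -- all neighbors of F 0 lie on the path
  have hend0 : ∀ w, C.Adj (F 0) w → w ∈ A := by
    intro w hw
    by_contra hwA
    refine hnoext [w] (List.nodup_singleton w) (List.isChain_singleton w) ?_ 0 1 (by omega)
      (by omega) ?_ (asc F 1 (l-1)) ?_ ?_ ?_ ?_ ?_
    · intro x hx i hi hne
      rw [List.mem_singleton] at hx
      subst hx
      exact hwA ((hmemA _).mpr ⟨i, hi, hne⟩)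
    · intro x hx
      obtain rfl : w = x := by simpa using hx
      exact hw.symm
    · exact nodup_asc F 1 (l-1) (fun a b h1 h2 h3 h4 h5 => hFinj a b (by omega) (by omega) h5)
    · exact chain'_asc F 1 (l-1) (fun a h1 h2 => hFadj a (by omega))
    · intro x hx
      rw [mem_asc] at hx
      obtain ⟨i, h1, h2, rfl⟩ := hx
      exact ⟨i, h1, by omega, rfl⟩
    · intro x hx
      rcases Nat.lt_or_ge 1 l with h | h
      · rw [head?_asc F 1 (l-1) (by omega)] at hx
        obtain rfl : F 1 = x := by simpa using hx
        exact hFadj 0 (by omega)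
      · have h0 : l - 1 = 0 := by omega
        rw [h0] at hx
        simp [asc] at hx
    · simp only [List.length_singleton, asc_length]
      omega
  -- colors alternate along the path
  have hcol : ∀ i, i < l → c (F i) = (if i % 2 = 0 then c (F 0) else !(c (F 0))) := by
    intro i
    induction i with
    | zero => intro _; simp
    | succ m ih =>
      intro h
      have hm := ih (by omega)
      have hne := hbip _ _ (hFadj m (by omega))
      have hstep : c (F (m+1)) = !(c (F m)) := Bool.eq_not_of_ne (Ne.symm hne)
      rw [hstep, hm]
      by_cases hp : m % 2 = 0
      · have h2 : ¬ ((m+1) % 2 = 0) := by omega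
        simp [hp, h2]
      · have h2 : (m+1) % 2 = 0 := by omega
        simp [hp, h2]
  set Odds : Finset ℕ := (Finset.range (l/2)).image (fun t => 2*t+1) with hOdef
  have hOcard : Odds.card = l / 2 := by
    rw [hOdef, Finset.card_image_of_injective _ (fun a b h => by dsimp at h; omega : Function.Injective fun t => 2*t+1), Finset.card_range]
  have hmemO : ∀ i, i ∈ Odds ↔ i < l ∧ i % 2 = 1 := by
    intro i
    simp only [hOdef, Finset.mem_image, Finset.mem_range]
    constructor
    · rintro ⟨t, ht, rfl⟩; omega
    · rintro ⟨h1, h2⟩; exact ⟨i/2, by omega, by omega⟩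
  have hNsub : C.neighborFinset (F 0) ⊆ Odds.image F := by
    intro v hv
    rw [SimpleGraph.mem_neighborFinset] at hv
    obtain ⟨i, hi, rfl⟩ := (hmemA v).mp (hend0 v hv)
    have hiodd : i % 2 = 1 := by
      have hb := hbip _ _ hv
      have hc := hcol i hi
      by_contra hodd
      rw [if_pos (by omega)] at hc
      exact hb hc.symm
    exact Finset.mem_image.mpr ⟨i, (hmemO i).mpr ⟨hi, hiodd⟩, rfl⟩
  have hhalf : k - 1 ≤ l / 2 := by
    calc k - 1 ≤ C.degree (F 0) := hdeg _
    _ = (C.neighborFinset (F 0)).card := rfl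
    _ ≤ (Odds.image F).card := Finset.card_le_card hNsub
    _ ≤ Odds.card := Finset.card_image_le
    _ = l / 2 := hOcard
  have hl2k : l ≤ 2*k - 1 := by
    by_contra h
    exact hnopath (hasPathOn_mono ⟨f, hfinj, hfadj⟩ (by omega))
  have hlcase : l = 2*k - 2 ∨ l = 2*k - 1 := by omega
  have hhalf' : l / 2 = k - 1 := by omega
  have hNeq : C.neighborFinset (F 0) = Odds.image F := by
    refine Finset.eq_of_subset_of_card_le hNsub ?_
    calc (Odds.image F).card ≤ Odds.card := Finset.card_image_le
    _ = l/2 := hOcard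
    _ = k - 1 := hhalf'
    _ ≤ C.degree (F 0) := hdeg _
    _ = (C.neighborFinset (F 0)).card := rfl
  have hub : ∀ i, i < l → i % 2 = 1 → C.Adj (F 0) (F i) := by
    intro i hi hio
    have : F i ∈ C.neighborFinset (F 0) := by
      rw [hNeq]
      exact Finset.mem_image.mpr ⟨i, (hmemO i).mpr ⟨hi, hio⟩, rfl⟩
    rwa [SimpleGraph.mem_neighborFinset] at this
  rcases hlcase with hle | hlo
  · -- CASE l = 2k-2 : the path spans everything
    have hall : ∀ v : V, v ∈ A := by
      intro v
      by_contra hv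
      obtain ⟨w⟩ := hconn.preconnected v (F 0)
      obtain ⟨p, q, hp, hq, hadj, -⟩ := boundary (fun x => x ∈ A) w hv hF0A
      obtain ⟨i, hi, rfl⟩ := (hmemA q).mp hq
      refine hnoext [p] (List.nodup_singleton p) (List.isChain_singleton p) ?_ i (i+1) hi
        (by omega) ?_ ((asc F (i+1) (l-(i+1))).reverse) ?_ ?_ ?_ ?_ ?_
      · intro x hx i' hi' hne
        rw [List.mem_singleton] at hx
        subst hx
        exact hp ((hmemA _).mpr ⟨i', hi', hne⟩)
      · intro x hx
        obtain rfl : p = x := by simpa using hx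
        exact hadj
      · rw [List.nodup_reverse]
        exact nodup_asc _ _ _ (fun a b h1 h2 h3 h4 h5 => hFinj a b (by omega) (by omega) h5)
      · exact chain'_asc_rev _ _ _ (fun a h1 h2 => hFadj a (by omega))
      · intro x hx
        rw [List.mem_reverse, mem_asc] at hx
        obtain ⟨i', h1, h2, rfl⟩ := hx
        exact ⟨i', h1, by omega, rfl⟩
      · intro x hx
        rcases Nat.lt_or_ge (i+1) l with h | h
        · rw [head?_asc_rev F (i+1) (l-(i+1)) (by omega)] at hx
          obtain rfl : F (i+1 + (l-(i+1)) - 1) = x := by simpa using hx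
          have he : i+1 + (l-(i+1)) - 1 = l - 1 := by omega
          rw [he]
          exact hub (l-1) (by omega) (by omega)
        · have h0 : l - (i+1) = 0 := by omega
          rw [h0] at hx
          simp [asc] at hx
      · simp only [List.length_singleton, List.length_reverse, asc_length]
        omega
    have hcardV : Fintype.card V = l := by
      have hAuniv : A = Finset.univ := Finset.eq_univ_iff_forall.mpr hall
      have hcA : A.card = l := by
        rw [hAdef, Finset.card_image_of_injOn, Finset.card_range]
        intro a ha b hb h
        exact hFinj a b (by simpa using ha) (by simpa using hb) h
      rw [← Finset.card_univ, ← hAuniv, hcA]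
    have hsum : (Finset.univ.filter fun v => c v = true).card +
        (Finset.univ.filter fun v => c v = false).card = Fintype.card V := by
      rw [← Finset.card_univ]
      have h := Finset.card_filter_add_card_filter_not
        (s := (Finset.univ : Finset V)) (p := fun v => c v = true)
      simpa [Bool.not_eq_true] using h
    have hge : ∀ b : Bool, k - 1 ≤ (Finset.univ.filter fun v => c v = b).card := by
      intro b
      obtain ⟨v, hv⟩ : ∃ v, c v = !b := by
        by_cases hb0 : c (F 0) = !b
        · exact ⟨F 0, hb0⟩
        · refine ⟨F 1, ?_⟩
          have hne := hbip _ _ (hFadj 0 (by omega))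
          have h0 : c (F 0) = b := by
            revert hb0
            cases c (F 0) <;> cases b <;> simp
          rw [Bool.eq_not_of_ne (Ne.symm hne), h0]
      have hsub2 : C.neighborFinset v ⊆ Finset.univ.filter fun u => c u = b := by
        intro u hu
        rw [SimpleGraph.mem_neighborFinset] at hu
        have hcu := Bool.eq_not_of_ne (Ne.symm (hbip _ _ hu))
        simp only [Finset.mem_filter, Finset.mem_univ, true_and]
        rw [hcu, hv, Bool.not_not]
      calc k - 1 ≤ C.degree v := hdeg v
      _ = (C.neighborFinset v).card := rfl
      _ ≤ _ := Finset.card_le_card hsub2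
    have h1 := hge true
    have h2 := hge false
    left
    omega
  · -- CASE l = 2k-1
    have hoff : ∀ v : V, v ∉ A → c v = c (F 0) := by
      intro v hv
      by_contra hcv
      obtain ⟨w⟩ := hconn.preconnected v (F 0)
      obtain ⟨p, q, hp, hq, hadj, htag⟩ := boundary (fun x => x ∈ A) w hv hF0A
      obtain ⟨i, hi, rfl⟩ := (hmemA q).mp hq
      by_cases hio : i % 2 = 0
      · -- even index: extend through F 0 and the hub
        refine hnoext [p] (List.nodup_singleton p) (List.isChain_singleton p) ?_ i (i+1) hi
          (by omega) ?_ (asc F (i+1) (l-(i+1))) ?_ ?_ ?_ ?_ ?_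
        · intro x hx i' hi' hne
          rw [List.mem_singleton] at hx
          subst hx
          exact hp ((hmemA _).mpr ⟨i', hi', hne⟩)
        · intro x hx
          obtain rfl : p = x := by simpa using hx
          exact hadj
        · exact nodup_asc _ _ _ (fun a b h1 h2 h3 h4 h5 => hFinj a b (by omega) (by omega) h5)
        · exact chain'_asc _ _ _ (fun a h1 h2 => hFadj a (by omega))
        · intro x hx
          rw [mem_asc] at hx
          obtain ⟨i', h1, h2, rfl⟩ := hx
          exact ⟨i', h1, by omega, rfl⟩
        · intro x hx
          rcases Nat.lt_or_ge (i+1) l with h | h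
          · rw [head?_asc F (i+1) (l-(i+1)) (by omega)] at hx
            obtain rfl : F (i+1) = x := by simpa using hx
            exact hub (i+1) h (by omega)
          · have h0 : l - (i+1) = 0 := by omega
            rw [h0] at hx
            simp [asc] at hx
        · simp only [List.length_singleton, asc_length]
          omega
      · -- odd index
        have hci : c (F i) = !(c (F 0)) := by rw [hcol i hi, if_neg hio]
        rcases htag with heq | ⟨r, hr, hradj⟩
        · have hb := hbip _ _ hadj
          exact hb (by rw [heq, hci]; exact Bool.eq_not_of_ne hcv)
        · have hrp : r ≠ p := hradj.ne
          refine hnoext [r, p] (by simp [hrp]) (List.isChain_pair.mpr hradj) ?_ i (i+2) hi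
            (by omega) ?_ (asc F (i+2) (l-(i+2))) ?_ ?_ ?_ ?_ ?_
          · intro x hx i' hi' hne
            rw [List.mem_cons, List.mem_singleton] at hx
            rcases hx with rfl | rfl
            · exact hr ((hmemA _).mpr ⟨i', hi', hne⟩)
            · exact hp ((hmemA _).mpr ⟨i', hi', hne⟩)
          · intro x hx
            obtain rfl : p = x := by simpa using hx
            exact hadj
          · exact nodup_asc _ _ _ (fun a b h1 h2 h3 h4 h5 => hFinj a b (by omega) (by omega) h5)
          · exact chain'_asc _ _ _ (fun a h1 h2 => hFadj a (by omega))
          · intro x hx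
            rw [mem_asc] at hx
            obtain ⟨i', h1, h2, rfl⟩ := hx
            exact ⟨i', h1, by omega, rfl⟩
          · intro x hx
            rcases Nat.lt_or_ge (i+2) l with h | h
            · rw [head?_asc F (i+2) (l-(i+2)) (by omega)] at hx
              obtain rfl : F (i+2) = x := by simpa using hx
              exact hub (i+2) h (by omega)
            · have h0 : l - (i+2) = 0 := by omega
              rw [h0] at hx
              simp [asc] at hx
          · simp only [List.length_cons, List.length_singleton, List.length_nil, asc_length]
            omega
    have hfilter : (Finset.univ.filter fun v => c v = !(c (F 0))) = Odds.image F := by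
      ext v
      simp only [Finset.mem_filter, Finset.mem_univ, true_and, Finset.mem_image]
      constructor
      · intro hcv
        have hvA : v ∈ A := by
          by_contra h
          rw [hoff v h] at hcv
          simp at hcv
        obtain ⟨i, hi, rfl⟩ := (hmemA v).mp hvA
        have hio : i % 2 = 1 := by
          by_contra h0
          rw [hcol i hi, if_pos (by omega)] at hcv
          simp at hcv
        exact ⟨i, (hmemO i).mpr ⟨hi, hio⟩, rfl⟩
      · rintro ⟨i, hiO, rfl⟩
        obtain ⟨hi, hio⟩ := (hmemO i).mp hiO
        rw [hcol i hi, if_neg (by omega)]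
    have hcard : (Finset.univ.filter fun v => c v = !(c (F 0))).card = k - 1 := by
      rw [hfilter, Finset.card_image_of_injOn, hOcard, hhalf']
      intro a ha b hb h
      exact hFinj a b ((hmemO a).mp (Finset.mem_coe.mp ha)).1 ((hmemO b).mp (Finset.mem_coe.mp hb)).1 h
    cases h0 : c (F 0)
    · left
      rw [← hcard]
      congr 1
      ext v
      simp [h0]
    · right
      rw [← hcard]
      congr 1
      ext v
      simp [h0]
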